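/- Suppose each A_i is symmetric. (a) For every U, Z ∈ ℝ^{n×r}, the map t ↦ f(U + tZ) is twice differentiable and its second derivative at t = 0 equals Σ_{i=1}^m [8·⟨A_i, U·Zᵀ⟩² + 4·(⟨A_i, U·Uᵀ⟩ − y_i)·⟨A_i, Z·Zᵀ⟩]. (b) If moreover y_i = ⟨A_i, X*⟩ with X* = U*·U*ᵀ for some U* ∈ ℝ^{n×r}, U satisfies Σ_{i=1}^m ⟨A_i, U·Uᵀ − X*⟩·A_i·U = 0, R is an r×r orthogonal matrix, and Δ_j := (U − U*R)·e_j·e_jᵀ for j = 1,…,r (e_j the standard basis of ℝ^r), then Σ_{j=1}^r (d²/dt²)|_{t=0} f(U + tΔ_j) = 4·Σ_{i=1}^m [2·Σ_{j=1}^r ⟨A_i, U·Δ_jᵀ⟩² − ⟨A_i, U·Uᵀ − X*⟩²]. -/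

import Mathlib

open Matrix MeasureTheory BigOperators

/-- Matrix inner product `⟨A, X⟩ = trace(Aᵀ X)`. -/
noncomputable def mip {n : ℕ} (A X : Matrix (Fin n) (Fin n) ℝ) : ℝ :=
  (Aᵀ * X).trace

/-- Frobenius norm of a real matrix. -/
noncomputable def frob {n₁ n₂ : ℕ} (M : Matrix (Fin n₁) (Fin n₂) ℝ) : ℝ :=
  Real.sqrt (∑ i, ∑ j, (M i j) ^ 2)

/-- `(k, δ)`-restricted isometry property of the measurement operator `A`. -/
def RIP {n m : ℕ} (A : Fin m → Matrix (Fin n) (Fin n) ℝ) (k : ℕ) (δ : ℝ) : Prop :=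
  ∀ X : Matrix (Fin n) (Fin n) ℝ, X.rank ≤ k →
    (1 - δ) * frob X ^ 2 ≤ (1 / (m : ℝ)) * ∑ i, mip (A i) X ^ 2 ∧
    (1 / (m : ℝ)) * ∑ i, mip (A i) X ^ 2 ≤ (1 + δ) * frob X ^ 2

/-- Objective `f(U) = ∑ i, (⟨A i, U Uᵀ⟩ - y i)²`. -/
noncomputable def fobj {n m r : ℕ} (A : Fin m → Matrix (Fin n) (Fin n) ℝ) (y : Fin m → ℝ)
    (U : Matrix (Fin n) (Fin r) ℝ) : ℝ :=
  ∑ i, (mip (A i) (U * Uᵀ) - y i) ^ 2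

section Aux

variable {n r m : ℕ}

lemma mip_add (A X Y : Matrix (Fin n) (Fin n) ℝ) : mip A (X + Y) = mip A X + mip A Y := by
  simp [mip, Matrix.mul_add]

lemma mip_sub (A X Y : Matrix (Fin n) (Fin n) ℝ) : mip A (X - Y) = mip A X - mip A Y := by
  simp [mip, Matrix.mul_sub]

lemma mip_smul (A X : Matrix (Fin n) (Fin n) ℝ) (s : ℝ) : mip A (s • X) = s * mip A X := by
  simp [mip, Matrix.mul_smul]

lemma mip_sum_right (A : Matrix (Fin n) (Fin n) ℝ) (M : Fin r → Matrix (Fin n) (Fin n) ℝ) :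
    mip A (∑ j, M j) = ∑ j, mip A (M j) := by
  simp [mip, Matrix.mul_sum]

lemma mip_sum_smul_left (c : Fin m → ℝ) (A : Fin m → Matrix (Fin n) (Fin n) ℝ)
    (M : Matrix (Fin n) (Fin n) ℝ) :
    mip (∑ i, c i • A i) M = ∑ i, c i * mip (A i) M := by
  simp [mip, Matrix.sum_mul, Matrix.transpose_sum, Matrix.smul_mul]

lemma mip_symm (A : Matrix (Fin n) (Fin n) ℝ) (hA : Aᵀ = A) (U Z : Matrix (Fin n) (Fin r) ℝ) :
    mip A (Z * Uᵀ) = mip A (U * Zᵀ) := by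
  unfold mip
  rw [hA]
  conv_lhs => rw [← Matrix.trace_transpose]
  rw [Matrix.transpose_mul, Matrix.transpose_mul, Matrix.transpose_transpose, hA,
    Matrix.trace_mul_comm]

lemma expand_sq (U Z : Matrix (Fin n) (Fin r) ℝ) (s : ℝ) :
    (U + s • Z) * (U + s • Z)ᵀ
      = U * Uᵀ + s • (U * Zᵀ) + s • (Z * Uᵀ) + (s ^ 2) • (Z * Zᵀ) := by
  simp only [Matrix.transpose_add, Matrix.transpose_smul, Matrix.add_mul, Matrix.mul_add,
    Matrix.smul_mul, Matrix.mul_smul, smul_smul, smul_add, ← sq]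
  abel

lemma Esym (j : Fin r) : (Matrix.single j j (1:ℝ))ᵀ = Matrix.single j j 1 := by
  ext a b
  simp [Matrix.single, Matrix.transpose_apply, and_comm]

lemma Esum : ∑ j : Fin r, Matrix.single j j (1:ℝ) = 1 := by
  ext a b
  by_cases h : a = b
  · subst h; simp [Matrix.sum_apply, Matrix.single, Matrix.one_apply]
  · have hx : ∀ x : Fin r, ¬(x = a ∧ x = b) := by rintro x ⟨rfl, rfl⟩; exact h rfl
    simp [Matrix.sum_apply, Matrix.single, Matrix.one_apply, h, hx]

lemma poly_hasDerivAt (P b c t : ℝ) :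
    HasDerivAt (fun s : ℝ => P + b * s + c * s ^ 2) (b + 2 * c * t) t := by
  have h1 : HasDerivAt (fun s : ℝ => P + b * s + c * s ^ 2)
      (0 + b * 1 + c * (↑2 * t ^ 1)) t :=
    ((hasDerivAt_const t P).add ((hasDerivAt_id t).const_mul b)).add
      ((hasDerivAt_pow 2 t).const_mul c)
  convert h1 using 1
  ring

lemma lin_hasDerivAt (b c t : ℝ) :
    HasDerivAt (fun s : ℝ => b + 2 * c * s) (2 * c) t := by
  have h1 : HasDerivAt (fun s : ℝ => b + 2 * c * s) (0 + 2 * c * 1) t :=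
    (hasDerivAt_const t b).add ((hasDerivAt_id t).const_mul (2 * c))
  convert h1 using 1; ring

lemma F_hasDerivAt (P b c : Fin m → ℝ) (t : ℝ) :
    HasDerivAt (fun s : ℝ => ∑ i, (P i + b i * s + c i * s ^ 2) ^ 2)
      (∑ i, 2 * (P i + b i * t + c i * t ^ 2) * (b i + 2 * c i * t)) t := by
  apply HasDerivAt.fun_sum
  intro i _
  have h := (poly_hasDerivAt (P i) (b i) (c i) t).fun_pow 2
  convert h using 1
  · rfl
  push_cast
  ring

lemma G_hasDerivAt (P b c : Fin m → ℝ) (t : ℝ) :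
    HasDerivAt (fun s : ℝ => ∑ i, 2 * (P i + b i * s + c i * s ^ 2) * (b i + 2 * c i * s))
      (∑ i, (2 * (b i + 2 * c i * t) * (b i + 2 * c i * t)
        + 2 * (P i + b i * t + c i * t ^ 2) * (2 * c i))) t := by
  apply HasDerivAt.fun_sum
  intro i _
  have h := (((poly_hasDerivAt (P i) (b i) (c i) t).const_mul 2).fun_mul
    (lin_hasDerivAt (b i) (c i) t))
  convert h using 1

lemma fobj_line (A : Fin m → Matrix (Fin n) (Fin n) ℝ) (hsym : ∀ i, (A i)ᵀ = A i)
    (y : Fin m → ℝ) (U Z : Matrix (Fin n) (Fin r) ℝ) :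
    (fun s : ℝ => fobj A y (U + s • Z)) =
      fun s => ∑ i, ((mip (A i) (U * Uᵀ) - y i) + (2 * mip (A i) (U * Zᵀ)) * s
        + mip (A i) (Z * Zᵀ) * s ^ 2) ^ 2 := by
  funext s
  unfold fobj
  refine Finset.sum_congr rfl fun i _ => ?_
  rw [expand_sq, mip_add, mip_add, mip_add, mip_smul, mip_smul, mip_smul,
    mip_symm (A i) (hsym i) U Z]
  ring

lemma deriv_line (A : Fin m → Matrix (Fin n) (Fin n) ℝ) (hsym : ∀ i, (A i)ᵀ = A i)
    (y : Fin m → ℝ) (U Z : Matrix (Fin n) (Fin r) ℝ) :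
    deriv (fun s : ℝ => fobj A y (U + s • Z)) =
      fun t => ∑ i, 2 * ((mip (A i) (U * Uᵀ) - y i) + (2 * mip (A i) (U * Zᵀ)) * t
        + mip (A i) (Z * Zᵀ) * t ^ 2) * ((2 * mip (A i) (U * Zᵀ)) + 2 * mip (A i) (Z * Zᵀ) * t) := by
  rw [fobj_line A hsym y U Z]
  funext t
  exact (F_hasDerivAt _ _ _ t).deriv

lemma sderiv (A : Fin m → Matrix (Fin n) (Fin n) ℝ) (hsym : ∀ i, (A i)ᵀ = A i)
    (y : Fin m → ℝ) (U Z : Matrix (Fin n) (Fin r) ℝ) :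
    deriv (deriv fun s : ℝ => fobj A y (U + s • Z)) 0 =
      ∑ i, (8 * mip (A i) (U * Zᵀ) ^ 2 +
        4 * (mip (A i) (U * Uᵀ) - y i) * mip (A i) (Z * Zᵀ)) := by
  rw [deriv_line A hsym y U Z, (G_hasDerivAt _ _ _ 0).deriv]
  exact Finset.sum_congr rfl fun i _ => by ring

end Aux

/-- Hessian computation: (a) second derivative of `f` along any direction `Z`;
(b) its value summed along the directions `Δ_j = (U - U*R) e_j e_jᵀ` at a stationary point. -/
theorem hessian_computation {n m r : ℕ} (hn : 0 < n) (hm : 0 < m) (hr : 0 < r)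
    (A : Fin m → Matrix (Fin n) (Fin n) ℝ) (hsym : ∀ i, (A i)ᵀ = A i)
    (y : Fin m → ℝ) :
    (∀ U Z : Matrix (Fin n) (Fin r) ℝ,
      (∀ t : ℝ, DifferentiableAt ℝ (fun s : ℝ => fobj A y (U + s • Z)) t) ∧
      (∀ t : ℝ, DifferentiableAt ℝ (deriv fun s : ℝ => fobj A y (U + s • Z)) t) ∧
      deriv (deriv fun s : ℝ => fobj A y (U + s • Z)) 0 =
        ∑ i, (8 * mip (A i) (U * Zᵀ) ^ 2 +
          4 * (mip (A i) (U * Uᵀ) - y i) * mip (A i) (Z * Zᵀ))) ∧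
    (∀ (U Ustar : Matrix (Fin n) (Fin r) ℝ) (Xstar : Matrix (Fin n) (Fin n) ℝ)
        (R : Matrix (Fin r) (Fin r) ℝ),
      Xstar = Ustar * Ustarᵀ →
      (∀ i, y i = mip (A i) Xstar) →
      Rᵀ * R = 1 →
      (∑ i, mip (A i) (U * Uᵀ - Xstar) • (A i * U) = 0) →
      ∑ j : Fin r,
          deriv (deriv fun s : ℝ =>
            fobj A y (U + s • ((U - Ustar * R) * Matrix.single j j (1 : ℝ)))) 0 =
        4 * ∑ i, (2 * (∑ j : Fin r,
            mip (A i) (U * ((U - Ustar * R) * Matrix.single j j (1 : ℝ))ᵀ) ^ 2) -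
          mip (A i) (U * Uᵀ - Xstar) ^ 2)) := by
  constructor
  · intro U Z
    refine ⟨?_, ?_, sderiv A hsym y U Z⟩
    · intro t
      rw [fobj_line A hsym y U Z]
      exact (F_hasDerivAt _ _ _ t).differentiableAt
    · intro t
      rw [deriv_line A hsym y U Z]
      exact (G_hasDerivAt _ _ _ t).differentiableAt
  · intro U Ustar Xstar R hX hy hR hstat
    set Δ : Matrix (Fin n) (Fin r) ℝ := U - Ustar * R with hΔ
    set E : Fin r → Matrix (Fin r) (Fin r) ℝ := fun j => Matrix.single j j 1 with hE
    set c : Fin m → ℝ := fun i => mip (A i) (U * Uᵀ - Xstar) with hc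
    set S : Matrix (Fin n) (Fin n) ℝ := ∑ i, c i • A i with hS
    -- stationarity facts
    have hSU : S * U = 0 := by
      rw [hS, Matrix.sum_mul]
      simpa [Matrix.smul_mul] using hstat
    have hSsym : Sᵀ = S := by
      rw [hS, Matrix.transpose_sum]
      exact Finset.sum_congr rfl fun i _ => by rw [Matrix.transpose_smul, hsym i]
    have hUS : Uᵀ * S = 0 := by
      have h := congrArg Matrix.transpose hSU
      rwa [Matrix.transpose_mul, hSsym, Matrix.transpose_zero] at h
    have hRR : R * Rᵀ = 1 := mul_eq_one_comm.mp hR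
    -- expansion of Δ Δᵀ
    have hΔΔ : Δ * Δᵀ = U * Uᵀ - U * (Rᵀ * Ustarᵀ) - Ustar * (R * Uᵀ) + Xstar := by
      rw [hΔ, Matrix.transpose_sub, Matrix.transpose_mul, Matrix.sub_mul, Matrix.mul_sub,
        Matrix.mul_sub]
      have h1 : Ustar * R * (Uᵀ - Rᵀ * Ustarᵀ)
          = Ustar * (R * Uᵀ) - Xstar := by
        rw [Matrix.mul_sub, Matrix.mul_assoc, hX]
        congr 1
        rw [Matrix.mul_assoc, ← Matrix.mul_assoc R, hRR, Matrix.one_mul]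
      rw [Matrix.mul_sub] at h1
      rw [h1]
      abel
    -- zero traces against S
    have hz1 : ∀ X : Matrix (Fin r) (Fin n) ℝ, mip S (U * X) = 0 := by
      intro X
      rw [mip, hSsym, ← Matrix.mul_assoc, hSU, Matrix.zero_mul, Matrix.trace_zero]
    have hz2 : mip S (Ustar * (R * Uᵀ)) = 0 := by
      rw [mip, hSsym, ← Matrix.mul_assoc, ← Matrix.mul_assoc, Matrix.trace_mul_comm,
        ← Matrix.mul_assoc, ← Matrix.mul_assoc, hUS]
      simp
    -- key stationarity identity
    have hkey : mip S (Δ * Δᵀ) = - mip S (U * Uᵀ - Xstar) := by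
      rw [hΔΔ, mip_add, mip_sub, mip_sub, mip_sub]
      have e1 : mip S (U * Uᵀ) = 0 := hz1 Uᵀ
      have e2 : mip S (U * (Rᵀ * Ustarᵀ)) = 0 := hz1 _
      rw [e1, e2, hz2]
      ring
    have hstat' : ∑ i, c i * mip (A i) (Δ * Δᵀ) = - ∑ i, c i ^ 2 := by
      have e1 : ∑ i, c i * mip (A i) (Δ * Δᵀ) = mip S (Δ * Δᵀ) :=
        (mip_sum_smul_left c A _).symm
      have e2 : ∑ i, c i ^ 2 = mip S (U * Uᵀ - Xstar) := by
        rw [mip_sum_smul_left c A]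
        exact Finset.sum_congr rfl fun i _ => by simp only [hc]; ring
      rw [e1, e2, hkey]
    -- sum of the direction matrices
    have hEsum : ∀ i, ∑ j, mip (A i) ((Δ * E j) * (Δ * E j)ᵀ) = mip (A i) (Δ * Δᵀ) := by
      intro i
      rw [← mip_sum_right]
      congr 1
      have hterm : ∀ j, (Δ * E j) * (Δ * E j)ᵀ = Δ * (E j * Δᵀ) := by
        intro j
        rw [Matrix.transpose_mul, hE]
        simp only []
        rw [Esym j, Matrix.mul_assoc, ← Matrix.mul_assoc (Matrix.single j j (1:ℝ)),
          Matrix.single_mul_single_same, one_mul]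
      rw [Finset.sum_congr rfl fun j _ => hterm j, ← Matrix.mul_sum, ← Matrix.sum_mul,
        hE]
      simp only []
      rw [Esum, Matrix.one_mul]
    -- rewrite each second derivative
    have hder : ∀ j : Fin r,
        deriv (deriv fun s : ℝ => fobj A y (U + s • (Δ * E j))) 0 =
          ∑ i, (8 * mip (A i) (U * (Δ * E j)ᵀ) ^ 2 +
            4 * c i * mip (A i) ((Δ * E j) * (Δ * E j)ᵀ)) := by
      intro j
      rw [sderiv A hsym y U (Δ * E j)]
      refine Finset.sum_congr rfl fun i _ => ?_
      have : mip (A i) (U * Uᵀ) - y i = c i := by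
        simp only [hc]
        rw [mip_sub, hy i]
      rw [this]
    calc ∑ j : Fin r, deriv (deriv fun s : ℝ => fobj A y (U + s • (Δ * E j))) 0
        = ∑ j, ∑ i, (8 * mip (A i) (U * (Δ * E j)ᵀ) ^ 2 +
            4 * c i * mip (A i) ((Δ * E j) * (Δ * E j)ᵀ)) :=
          Finset.sum_congr rfl fun j _ => hder j
      _ = ∑ i, ∑ j, (8 * mip (A i) (U * (Δ * E j)ᵀ) ^ 2 +
            4 * c i * mip (A i) ((Δ * E j) * (Δ * E j)ᵀ)) := Finset.sum_comm
      _ = ∑ i, (8 * ∑ j, mip (A i) (U * (Δ * E j)ᵀ) ^ 2 + 4 * c i * mip (A i) (Δ * Δᵀ)) := by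
          refine Finset.sum_congr rfl fun i _ => ?_
          rw [Finset.sum_add_distrib, ← Finset.mul_sum, ← Finset.mul_sum, hEsum i]
      _ = 4 * ∑ i, (2 * (∑ j, mip (A i) (U * (Δ * E j)ᵀ) ^ 2) - c i ^ 2) := by
          rw [← sub_eq_zero, Finset.mul_sum, ← Finset.sum_sub_distrib,
            Finset.sum_congr rfl (fun i _ => (by ring :
              (8 * ∑ j, mip (A i) (U * (Δ * E j)ᵀ) ^ 2 + 4 * c i * mip (A i) (Δ * Δᵀ))
                - 4 * (2 * (∑ j, mip (A i) (U * (Δ * E j)ᵀ) ^ 2) - c i ^ 2)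
              = 4 * (c i * mip (A i) (Δ * Δᵀ) + c i ^ 2))),
            ← Finset.mul_sum, Finset.sum_add_distrib, hstat']
          ring
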